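/- Lemma 1, part 2 (matrix pencil): Let Q_1, Q_2 ∈ ℝ^{m×m} both be symmetric negative definite. If s ∈ ℝ is such that s < t for every real number t with det(Q_1 − t·Q_2) = 0, then the matrix Q_1 − s·Q_2 is symmetric negative definite. -/

import Mathlib

open Matrix

private theorem aux_symm_dot {m : ℕ} {M : Matrix (Fin m) (Fin m) ℝ} (hM : M.IsSymm)
    (x y : Fin m → ℝ) : x ⬝ᵥ (M *ᵥ y) = y ⬝ᵥ (M *ᵥ x) := by
  rw [Matrix.dotProduct_mulVec, ← Matrix.mulVec_transpose, hM.eq, dotProduct_comm]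

private theorem aux_cont {m : ℕ} (M : Matrix (Fin m) (Fin m) ℝ) :
    Continuous fun η : Fin m → ℝ => η ⬝ᵥ (M *ᵥ η) := by
  simp only [dotProduct, Matrix.mulVec, dotProduct]
  fun_prop

private theorem aux_smul {m : ℕ} (M : Matrix (Fin m) (Fin m) ℝ) (c : ℝ) (v : Fin m → ℝ) :
    (c • v) ⬝ᵥ (M *ᵥ (c • v)) = c^2 * (v ⬝ᵥ (M *ᵥ v)) := by
  rw [Matrix.mulVec_smul, smul_dotProduct, dotProduct_smul,
    smul_eq_mul, smul_eq_mul]; ring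

private theorem aux_ker {m : ℕ} {M : Matrix (Fin m) (Fin m) ℝ} (hM : M.IsSymm)
    (hle : ∀ v, v ⬝ᵥ (M *ᵥ v) ≤ 0) {η : Fin m → ℝ} (h0 : η ⬝ᵥ (M *ᵥ η) = 0) :
    M *ᵥ η = 0 := by
  have hdot : ∀ v, v ⬝ᵥ (M *ᵥ η) = 0 := by
    intro v
    set a := v ⬝ᵥ (M *ᵥ v) with ha
    set b := v ⬝ᵥ (M *ᵥ η) with hb
    have key : ∀ ε : ℝ, ε^2 * a + 2*ε*b ≤ 0 := by
      intro ε
      have h := hle (η + ε • v)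
      simp only [Matrix.mulVec_add, Matrix.mulVec_smul, add_dotProduct,
        dotProduct_add, smul_dotProduct, dotProduct_smul,
        smul_eq_mul] at h
      have hs2 := aux_symm_dot hM v η
      rw [h0, ← hs2] at h
      nlinarith [h]
    by_contra hbne
    have hc : (0:ℝ) < |a| + 1 := by positivity
    have h1 := key (b / (|a| + 1))
    have h2 : -|a| ≤ a := neg_abs_le a
    have hb2 : 0 < b^2 := by positivity
    have heq : (|a|+1)^2 * ((b/(|a|+1))^2 * a + 2*(b/(|a|+1))*b) = b^2*a + 2*b^2*(|a|+1) := by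
      field_simp
    have h4 : b^2*a + 2*b^2*(|a|+1) ≤ 0 := by
      rw [← heq]; exact mul_nonpos_of_nonneg_of_nonpos (by positivity) h1
    nlinarith
  exact dotProduct_self_eq_zero.mp (hdot (M *ᵥ η))

theorem matrix_pencil_part2 {m : ℕ} (Q1 Q2 : Matrix (Fin m) (Fin m) ℝ)
    (hQ1symm : Q1.IsSymm) (hQ2symm : Q2.IsSymm)
    (hQ1neg : ∀ η : Fin m → ℝ, η ≠ 0 → η ⬝ᵥ (Q1 *ᵥ η) < 0)
    (hQ2neg : ∀ η : Fin m → ℝ, η ≠ 0 → η ⬝ᵥ (Q2 *ᵥ η) < 0)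
    (s : ℝ)
    (hs : ∀ t : ℝ, (Q1 - t • Q2).det = 0 → s < t) :
    (Q1 - s • Q2).IsSymm ∧
      ∀ η : Fin m → ℝ, η ≠ 0 → η ⬝ᵥ ((Q1 - s • Q2) *ᵥ η) < 0 := by
  have hsymm : ∀ t : ℝ, (Q1 - t • Q2).IsSymm := by
    intro t
    unfold Matrix.IsSymm
    rw [Matrix.transpose_sub, Matrix.transpose_smul, hQ1symm.eq, hQ2symm.eq]
  refine ⟨hsymm s, ?_⟩
  rcases Nat.eq_zero_or_pos m with hm | hm
  · intro η hη
    exfalso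
    apply hη
    subst hm
    ext i
    exact absurd i.2 (by omega)
  -- quadratic form of the pencil
  have hform : ∀ (t : ℝ) (η : Fin m → ℝ),
      η ⬝ᵥ ((Q1 - t • Q2) *ᵥ η) = η ⬝ᵥ (Q1 *ᵥ η) - t * (η ⬝ᵥ (Q2 *ᵥ η)) := by
    intro t η
    rw [Matrix.sub_mulVec, dotProduct_sub, Matrix.smul_mulVec,
      dotProduct_smul, smul_eq_mul]
  -- the ratio function and its minimum on the sphere
  set φ : (Fin m → ℝ) → ℝ := fun η => (η ⬝ᵥ (Q1 *ᵥ η)) / (η ⬝ᵥ (Q2 *ᵥ η)) with hφ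
  have hsph : ∀ η ∈ Metric.sphere (0 : Fin m → ℝ) 1, η ≠ 0 := by
    intro η hηs
    rw [mem_sphere_zero_iff_norm] at hηs
    intro h; rw [h] at hηs; simp at hηs
  have hφcont : ContinuousOn φ (Metric.sphere (0 : Fin m → ℝ) 1) := by
    apply ContinuousOn.div (aux_cont Q1).continuousOn (aux_cont Q2).continuousOn
    intro η hηs
    exact ne_of_lt (hQ2neg η (hsph η hηs))
  have : Nontrivial (Fin m → ℝ) := by
    have : NeZero m := ⟨by omega⟩
    infer_instance
  obtain ⟨η0, hη0mem, hmin⟩ := (isCompact_sphere (0 : Fin m → ℝ) 1).exists_isMinOn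
    (NormedSpace.sphere_nonempty.mpr zero_le_one) hφcont
  have hη0ne : η0 ≠ 0 := hsph η0 hη0mem
  set T : ℝ := φ η0 with hT
  -- pencil at T is negative semidefinite
  have hle : ∀ v : Fin m → ℝ, v ⬝ᵥ ((Q1 - T • Q2) *ᵥ v) ≤ 0 := by
    intro v
    rcases eq_or_ne v 0 with rfl | hv
    · simp
    · -- scale to the sphere
      have hvn : ‖v‖ ≠ 0 := norm_ne_zero_iff.mpr hv
      set u : Fin m → ℝ := ‖v‖⁻¹ • v with hu
      have hun : u ∈ Metric.sphere (0 : Fin m → ℝ) 1 := by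
        rw [mem_sphere_zero_iff_norm, hu, norm_smul, norm_inv, norm_norm]
        field_simp
      have hage : T ≤ φ u := hmin hun
      have hu2 : u ⬝ᵥ (Q2 *ᵥ u) < 0 := hQ2neg u (hsph u hun)
      have h1 : u ⬝ᵥ ((Q1 - T • Q2) *ᵥ u) ≤ 0 := by
        rw [hform]
        rw [hφ] at hage
        simp only [le_div_iff_of_neg hu2] at hage
        linarith
      have hscale : v ⬝ᵥ ((Q1 - T • Q2) *ᵥ v) = ‖v‖^2 * (u ⬝ᵥ ((Q1 - T • Q2) *ᵥ u)) := by
        have := aux_smul (Q1 - T • Q2) ‖v‖ u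
        rw [hu, smul_smul, mul_inv_cancel₀ hvn, one_smul] at this
        rw [this]
      rw [hscale]
      exact mul_nonpos_of_nonneg_of_nonpos (by positivity) h1
  -- the form vanishes at η0
  have h0 : η0 ⬝ᵥ ((Q1 - T • Q2) *ᵥ η0) = 0 := by
    have hne : η0 ⬝ᵥ (Q2 *ᵥ η0) ≠ 0 := ne_of_lt (hQ2neg η0 hη0ne)
    rw [hform, hT, hφ]
    field_simp
    ring
  -- hence det vanishes at T, so s < T
  have hdet : (Q1 - T • Q2).det = 0 :=
    Matrix.exists_mulVec_eq_zero_iff.mp ⟨η0, hη0ne, aux_ker (hsymm T) hle h0⟩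
  have hsT : s < T := hs T hdet
  -- conclude
  intro η hη
  have h2 : η ⬝ᵥ (Q2 *ᵥ η) < 0 := hQ2neg η hη
  have hT' : η ⬝ᵥ ((Q1 - T • Q2) *ᵥ η) ≤ 0 := hle η
  rw [hform] at hT' ⊢
  nlinarith
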